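/- For every odd positive integer L, the matrix S(L) is symmetric and satisfies S(L)·S(L) = Id, i.e. S(L) is a real orthogonal involution. -/

import Mathlib

/-- Index set `I_L = {o, v} ∪ {1,…,s} ∪ {σ, σ̄}` of primary fields of `SO(L)` level 2,
where `s = (L−1)/2`. The antisymmetric tensor of rank `ℓ` (for `1 ≤ ℓ ≤ s`) is `t l`
with `ℓ = l + 1` for `l : Fin s`. -/
inductive BIdx (s : ℕ) : Type
  | o : BIdx s
  | v : BIdx s
  | σ : BIdx s
  | σ' : BIdx s
  | t : Fin s → BIdx s
  deriving DecidableEq, Fintype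

/-- The modular S-matrix of `SO(L)` level 2 (`L` odd, `s = (L−1)/2`), with
`a = 1/(2√L)`: `S_{oo} = S_{ov} = S_{vv} = a`; `S_{oℓ} = S_{vℓ} = 2a`;
`S_{ℓℓ'} = 4a cos(2πℓℓ'/L)`; `S_{oσ} = S_{oσ̄} = 1/2`; `S_{vσ} = S_{vσ̄} = −1/2`;
`S_{ℓσ} = S_{ℓσ̄} = 0`; `S_{σσ} = S_{σ̄σ̄} = 1/2`; `S_{σσ̄} = −1/2`. -/
noncomputable def Smat (L s : ℕ) : Matrix (BIdx s) (BIdx s) ℝ := fun i j =>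
  match i, j with
  | .o, .o => 1 / (2 * Real.sqrt L)
  | .o, .v => 1 / (2 * Real.sqrt L)
  | .v, .o => 1 / (2 * Real.sqrt L)
  | .v, .v => 1 / (2 * Real.sqrt L)
  | .o, .t _ => 2 * (1 / (2 * Real.sqrt L))
  | .t _, .o => 2 * (1 / (2 * Real.sqrt L))
  | .v, .t _ => 2 * (1 / (2 * Real.sqrt L))
  | .t _, .v => 2 * (1 / (2 * Real.sqrt L))
  | .t l, .t l' => 4 * (1 / (2 * Real.sqrt L)) *
      Real.cos (2 * Real.pi * ((l : ℕ) + 1) * ((l' : ℕ) + 1) / L)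
  | .o, .σ => 1 / 2
  | .o, .σ' => 1 / 2
  | .σ, .o => 1 / 2
  | .σ', .o => 1 / 2
  | .v, .σ => -(1 / 2)
  | .v, .σ' => -(1 / 2)
  | .σ, .v => -(1 / 2)
  | .σ', .v => -(1 / 2)
  | .t _, .σ => 0
  | .t _, .σ' => 0
  | .σ, .t _ => 0
  | .σ', .t _ => 0
  | .σ, .σ => 1 / 2
  | .σ', .σ' => 1 / 2
  | .σ, .σ' => -(1 / 2)
  | .σ', .σ => -(1 / 2)

def BIdxEquiv (s : ℕ) : (Fin s ⊕ (Unit ⊕ Unit ⊕ Unit ⊕ Unit)) ≃ BIdx s :=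
    { toFun := Sum.elim (fun l => .t l)
        (Sum.elim (fun _ => .o) (Sum.elim (fun _ => .v) (Sum.elim (fun _ => .σ) fun _ => .σ')))
      invFun := fun i => match i with
        | .o => .inr (.inl ()) | .v => .inr (.inr (.inl ()))
        | .σ => .inr (.inr (.inr (.inl ()))) | .σ' => .inr (.inr (.inr (.inr ())))
        | .t l => .inl l
      left_inv := by rintro (l | (_|_|_|_)) <;> rfl
      right_inv := by rintro (_|_|_|_|l) <;> rfl }

lemma sum_BIdx {s : ℕ} {M : Type*} [AddCommMonoid M] (f : BIdx s → M) :
    ∑ i, f i = f .o + f .v + f .σ + f .σ' + ∑ l : Fin s, f (.t l) := by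
  rw [← (BIdxEquiv s).sum_comp f]
  simp [Fintype.sum_sum_type, BIdxEquiv]
  abel


lemma cos_mul_cos' (x y : ℝ) : Real.cos x * Real.cos y = (Real.cos (x+y) + Real.cos (x-y))/2 := by
  rw [Real.cos_add, Real.cos_sub]; ring

lemma cos_sum_eq (s k : ℕ) (hk0 : 0 < k) (hks : k < 2*s+1) :
    ∑ l : Fin s, Real.cos (2 * Real.pi * ((l:ℕ)+1) * k / ((2*s+1 : ℕ) : ℝ)) = -(1/2) := by
  set N : ℕ := 2*s+1 with hN
  have hN0 : (N:ℝ) ≠ 0 := by positivity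
  set θ : ℝ := 2 * Real.pi * k / N with hθ
  set z : ℂ := Complex.exp (θ * Complex.I) with hz
  have hzpow : ∀ n : ℕ, z ^ n = Complex.exp ((↑(n * θ) : ℂ) * Complex.I) := by
    intro n
    rw [hz, ← Complex.exp_nat_mul]
    push_cast
    ring_nf
  have hzN : z ^ N = 1 := by
    rw [hzpow]
    have h1 : ((N:ℝ) * θ) = (k:ℝ) * (2*Real.pi) := by
      rw [hθ, mul_div_assoc', div_eq_iff hN0]; ring
    rw [h1]
    have := Complex.exp_int_mul_two_pi_mul_I (k:ℤ)
    convert this using 2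
    push_cast
    ring
  have hz1 : z ≠ 1 := by
    intro h
    rw [hz, Complex.exp_eq_one_iff] at h
    obtain ⟨n, hn⟩ := h
    have h2 : (θ:ℂ) = (n:ℂ) * (2*Real.pi) := by
      apply mul_right_cancel₀ Complex.I_ne_zero
      rw [hn]; ring
    have h3 : θ = (n:ℝ) * (2*Real.pi) := by exact_mod_cast h2
    have h4 : (k:ℝ) = (n:ℝ) * N := by
      have h3' : 2*Real.pi*(k:ℝ)/N = (n:ℝ)*(2*Real.pi) := h3
      have h3'' : 2*Real.pi*(k:ℝ) = (n:ℝ)*(2*Real.pi)*N := by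
        field_simp at h3'
        rw [h3']; ring
      apply mul_left_cancel₀ (show (2*Real.pi:ℝ) ≠ 0 by positivity)
      linear_combination h3''
    have h5 : (k:ℤ) = n * N := by exact_mod_cast h4
    have h6 : (0:ℤ) < (k:ℤ) := by exact_mod_cast hk0
    have h7 : (k:ℤ) < (N:ℤ) := by exact_mod_cast hks
    rcases le_or_gt n 0 with hn0 | hn1
    · have : n * (N:ℤ) ≤ 0 := mul_nonpos_of_nonpos_of_nonneg hn0 (by positivity)
      omega
    · have : (N:ℤ) ≤ n * N := le_mul_of_one_le_left (by positivity) hn1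
      omega
  have hgeom : ∑ j ∈ Finset.range N, z^j = 0 := by
    rw [geom_sum_eq hz1, hzN]
    simp
  have hconj : ∀ j : ℕ, j < s → (starRingEnd ℂ) (z^(j+1)) = z^(N-(j+1)) := by
    intro j hj
    have h1 : z^(j+1) * z^(N-(j+1)) = 1 := by
      rw [← pow_add, Nat.add_sub_cancel' (by omega)]
      exact hzN
    have habs : ‖z^(j+1)‖ = 1 := by
      rw [hzpow]
      exact Complex.norm_exp_ofReal_mul_I _
    have hinv : (z^(j+1))⁻¹ = (starRingEnd ℂ) (z^(j+1)) := Complex.inv_eq_conj habs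
    rw [← hinv]
    exact (eq_inv_of_mul_eq_one_right h1).symm
  -- the partial geometric sum
  set S : ℂ := ∑ j ∈ Finset.range s, z^(j+1) with hS
  have hconjS : (starRingEnd ℂ) S = ∑ j ∈ Finset.range s, z^(s+j+1) := by
    rw [hS, map_sum]
    rw [show (∑ j ∈ Finset.range s, (starRingEnd ℂ) (z^(j+1)))
        = ∑ j ∈ Finset.range s, z^(N-(j+1)) from
      Finset.sum_congr rfl fun j hj => hconj j (Finset.mem_range.mp hj)]
    rw [← Finset.sum_range_reflect (fun j => z^(s+j+1)) s]
    apply Finset.sum_congr rfl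
    intro j hj
    have hj' := Finset.mem_range.mp hj
    congr 1
    omega
  have hsum2 : S + (starRingEnd ℂ) S = -1 := by
    rw [hS, hconjS, ← Finset.sum_range_add (fun j => z^(j+1)) s s]
    have h := Finset.sum_range_succ' (fun j => z^j) (s+s)
    rw [show s+s+1 = N by omega] at h
    rw [hgeom] at h
    simp only [pow_zero] at h
    have : ∑ j ∈ Finset.range (s+s), z^(j+1) + 1 = 0 := by
      rw [← h]
    linear_combination this
  have hSre : S.re = -(1/2) := by
    have := congrArg Complex.re hsum2
    rw [Complex.add_conj] at this
    simp at this
    linarith [this]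
  -- identify the real sum with S.re
  have hfin : ∑ l : Fin s, Real.cos (2 * Real.pi * ((l:ℕ)+1) * k / (N : ℝ)) = S.re := by
    rw [hS, Complex.re_sum,
      Fin.sum_univ_eq_sum_range (fun m => Real.cos (2 * Real.pi * ((m:ℝ)+1) * k / (N : ℝ))) s]
    apply Finset.sum_congr rfl
    intro j hj
    rw [hzpow, Complex.exp_ofReal_mul_I_re]
    congr 1
    rw [hθ]
    push_cast
    ring
  rw [hfin, hSre]

lemma term_eq (a' x y u v : ℝ) (hu : x + y = u) (hv : x - y = v) :
    (a' * Real.cos x) * (a' * Real.cos y) =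
      (a' * a' / 2) * Real.cos u + (a' * a' / 2) * Real.cos v := by
  subst hu hv
  rw [Real.cos_add, Real.cos_sub]
  ring

lemma tt_sum (s : ℕ) (l m : Fin s) :
    ∑ l' : Fin s, (4 * (1 / (2 * Real.sqrt ((2*s+1:ℕ):ℝ))) *
        Real.cos (2 * Real.pi * (((l:ℕ):ℝ) + 1) * (((l':ℕ):ℝ) + 1) / ((2*s+1:ℕ):ℝ))) *
      (4 * (1 / (2 * Real.sqrt ((2*s+1:ℕ):ℝ))) *
        Real.cos (2 * Real.pi * (((l':ℕ):ℝ) + 1) * (((m:ℕ):ℝ) + 1) / ((2*s+1:ℕ):ℝ)))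
    = (4 * (1 / (2 * Real.sqrt ((2*s+1:ℕ):ℝ))) * (4 * (1 / (2 * Real.sqrt ((2*s+1:ℕ):ℝ)))) / 2) *
      (-(1/2) + (if l = m then (s:ℝ) else -(1/2))) := by
  have hl := l.isLt
  have hm := m.isLt
  set a' : ℝ := 4 * (1 / (2 * Real.sqrt ((2*s+1:ℕ):ℝ))) with ha'
  have step : (∑ l' : Fin s, (a' *
        Real.cos (2 * Real.pi * (((l:ℕ):ℝ) + 1) * (((l':ℕ):ℝ) + 1) / ((2*s+1:ℕ):ℝ))) *
      (a' * Real.cos (2 * Real.pi * (((l':ℕ):ℝ) + 1) * (((m:ℕ):ℝ) + 1) / ((2*s+1:ℕ):ℝ))))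
      = (a' * a' / 2) * (∑ l' : Fin s,
          Real.cos (2 * Real.pi * (((l':ℕ):ℝ) + 1) * (((l:ℕ) + (m:ℕ) + 2 : ℕ):ℝ) / ((2*s+1:ℕ):ℝ)))
        + (a' * a' / 2) * (∑ l' : Fin s,
          Real.cos (2 * Real.pi * (((l':ℕ):ℝ) + 1) * (((l:ℕ):ℝ) - ((m:ℕ):ℝ)) / ((2*s+1:ℕ):ℝ))) := by
    rw [Finset.mul_sum, Finset.mul_sum, ← Finset.sum_add_distrib]
    refine Finset.sum_congr rfl fun l' _ => ?_
    exact term_eq a' _ _ _ _ (by push_cast; ring) (by push_cast; ring)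
  rw [step, cos_sum_eq s ((l:ℕ) + (m:ℕ) + 2) (by omega) (by omega)]
  rcases eq_or_ne l m with rfl | hlm
  · rw [if_pos rfl]
    rw [Finset.sum_congr rfl (fun (l' : Fin s) _ => by
      rw [show (2 * Real.pi * (((l':ℕ):ℝ) + 1) * (((l:ℕ):ℝ) - ((l:ℕ):ℝ)) / ((2*s+1:ℕ):ℝ)) = 0
        from by ring, Real.cos_zero])]
    rw [Finset.sum_const, Finset.card_univ, Fintype.card_fin, nsmul_eq_mul, mul_one]
    ring
  · rw [if_neg hlm]
    have hne : (l:ℕ) ≠ (m:ℕ) := fun h => hlm (Fin.ext h)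
    rcases Nat.lt_or_ge (l:ℕ) (m:ℕ) with hlt | hge
    · have h2 : (∑ l' : Fin s,
          Real.cos (2 * Real.pi * (((l':ℕ):ℝ) + 1) * (((l:ℕ):ℝ) - ((m:ℕ):ℝ)) / ((2*s+1:ℕ):ℝ)))
          = -(1/2) := by
        rw [← cos_sum_eq s ((m:ℕ) - (l:ℕ)) (by omega) (by omega)]
        refine Finset.sum_congr rfl fun l' _ => ?_
        rw [← Real.cos_neg (2 * Real.pi * (((l':ℕ):ℝ) + 1) * (((l:ℕ):ℝ) - ((m:ℕ):ℝ)) /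
          ((2*s+1:ℕ):ℝ))]
        congr 1
        push_cast [Nat.cast_sub hlt.le]
        ring
      rw [h2]
      ring
    · have h2 : (∑ l' : Fin s,
          Real.cos (2 * Real.pi * (((l':ℕ):ℝ) + 1) * (((l:ℕ):ℝ) - ((m:ℕ):ℝ)) / ((2*s+1:ℕ):ℝ)))
          = -(1/2) := by
        rw [← cos_sum_eq s ((l:ℕ) - (m:ℕ)) (by omega) (by omega)]
        refine Finset.sum_congr rfl fun l' _ => ?_
        congr 1
        push_cast [Nat.cast_sub hge]
        ring
      rw [h2]
      ring

set_option maxHeartbeats 2000000 in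
/-- For every odd positive integer `L` (written `L = 2s + 1`), the modular
S-matrix of `SO(L)` level 2 is symmetric and squares to the identity, i.e. it is a real
orthogonal involution. -/
theorem so_level2_S_symmetric_involution (L s : ℕ) (hL : L = 2 * s + 1) :
    (Smat L s).IsSymm ∧ Smat L s * Smat L s = 1 := by
  subst hL
  have hNpos : (0:ℝ) < ((2*s+1 : ℕ):ℝ) := by exact_mod_cast Nat.succ_pos (2*s)
  have hsq : Real.sqrt ((2*s+1:ℕ):ℝ) * Real.sqrt ((2*s+1:ℕ):ℝ) = 2*(s:ℝ)+1 := by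
    rw [Real.mul_self_sqrt (le_of_lt hNpos)]; push_cast; ring
  have hsne : Real.sqrt ((2*s+1:ℕ):ℝ) ≠ 0 := by positivity
  have hsq2 : Real.sqrt (2*(s:ℝ)+1) * Real.sqrt (2*(s:ℝ)+1) = 2*(s:ℝ)+1 :=
    Real.mul_self_sqrt (by positivity)
  have hsne2 : Real.sqrt (2*(s:ℝ)+1) ≠ 0 := by positivity
  constructor
  · rw [Matrix.IsSymm]
    ext i j
    cases i <;> cases j <;> simp [Smat, Matrix.transpose_apply] <;> ring_nf <;> tauto
  · ext i j
    rw [Matrix.mul_apply, sum_BIdx]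
    have hrow : ∀ m : Fin s, (∑ l' : Fin s,
        (2 * (1 / (2 * Real.sqrt ((2*s+1:ℕ):ℝ)))) *
          (4 * (1 / (2 * Real.sqrt ((2*s+1:ℕ):ℝ))) *
            Real.cos (2 * Real.pi * (((l':ℕ):ℝ) + 1) * (((m:ℕ):ℝ) + 1) / ((2*s+1:ℕ):ℝ))))
        = (2 * (1 / (2 * Real.sqrt ((2*s+1:ℕ):ℝ))) * (4 * (1 / (2 * Real.sqrt ((2*s+1:ℕ):ℝ)))))
          * -(1/2) := by
      intro m
      have hm := m.isLt
      rw [← cos_sum_eq s ((m:ℕ)+1) (by omega) (by omega), Finset.mul_sum]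
      refine Finset.sum_congr rfl fun l' _ => ?_
      rw [show (2 * Real.pi * (((l':ℕ):ℝ) + 1) * (((m:ℕ)+1 : ℕ):ℝ) / ((2*s+1:ℕ):ℝ))
          = 2 * Real.pi * (((l':ℕ):ℝ) + 1) * (((m:ℕ):ℝ) + 1) / ((2*s+1:ℕ):ℝ) from by
        push_cast; ring]
      ring
    have hcol : ∀ m : Fin s, (∑ l' : Fin s,
        (4 * (1 / (2 * Real.sqrt ((2*s+1:ℕ):ℝ))) *
            Real.cos (2 * Real.pi * (((m:ℕ):ℝ) + 1) * (((l':ℕ):ℝ) + 1) / ((2*s+1:ℕ):ℝ))) *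
          (2 * (1 / (2 * Real.sqrt ((2*s+1:ℕ):ℝ)))))
        = (2 * (1 / (2 * Real.sqrt ((2*s+1:ℕ):ℝ))) * (4 * (1 / (2 * Real.sqrt ((2*s+1:ℕ):ℝ)))))
          * -(1/2) := by
      intro m
      have hm := m.isLt
      rw [← cos_sum_eq s ((m:ℕ)+1) (by omega) (by omega), Finset.mul_sum]
      refine Finset.sum_congr rfl fun l' _ => ?_
      rw [show (2 * Real.pi * (((l':ℕ):ℝ) + 1) * (((m:ℕ)+1 : ℕ):ℝ) / ((2*s+1:ℕ):ℝ))
          = 2 * Real.pi * (((m:ℕ):ℝ) + 1) * (((l':ℕ):ℝ) + 1) / ((2*s+1:ℕ):ℝ) from by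
        push_cast; ring]
      ring
    cases i <;> cases j
    -- o row
    · simp only [Smat, Matrix.one_apply_eq, Finset.sum_const, Finset.card_univ,
        Fintype.card_fin, nsmul_eq_mul]
      push_cast
      field_simp
      linear_combination (-2) * hsq2
    · rw [show (1 : Matrix (BIdx s) (BIdx s) ℝ) BIdx.o BIdx.v = 0 from
        Matrix.one_apply_ne (by simp)]
      simp only [Smat, Finset.sum_const, Finset.card_univ, Fintype.card_fin, nsmul_eq_mul]
      push_cast
      field_simp
      linear_combination (-2) * hsq2
    · rw [show (1 : Matrix (BIdx s) (BIdx s) ℝ) BIdx.o BIdx.σ = 0 from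
        Matrix.one_apply_ne (by simp)]
      simp only [Smat, mul_zero, Finset.sum_const_zero]
      ring
    · rw [show (1 : Matrix (BIdx s) (BIdx s) ℝ) BIdx.o BIdx.σ' = 0 from
        Matrix.one_apply_ne (by simp)]
      simp only [Smat, mul_zero, Finset.sum_const_zero]
      ring
    · rename_i m
      rw [show (1 : Matrix (BIdx s) (BIdx s) ℝ) BIdx.o (BIdx.t m) = 0 from
        Matrix.one_apply_ne (by simp)]
      simp only [Smat]
      rw [hrow m]
      push_cast
      field_simp
      ring
    -- v row
    · rw [show (1 : Matrix (BIdx s) (BIdx s) ℝ) BIdx.v BIdx.o = 0 from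
        Matrix.one_apply_ne (by simp)]
      simp only [Smat, Finset.sum_const, Finset.card_univ, Fintype.card_fin, nsmul_eq_mul]
      push_cast
      field_simp
      linear_combination (-2) * hsq2
    · simp only [Smat, Matrix.one_apply_eq, Finset.sum_const, Finset.card_univ,
        Fintype.card_fin, nsmul_eq_mul]
      push_cast
      field_simp
      linear_combination (-2) * hsq2
    · rw [show (1 : Matrix (BIdx s) (BIdx s) ℝ) BIdx.v BIdx.σ = 0 from
        Matrix.one_apply_ne (by simp)]
      simp only [Smat, mul_zero, Finset.sum_const_zero]
      ring
    · rw [show (1 : Matrix (BIdx s) (BIdx s) ℝ) BIdx.v BIdx.σ' = 0 from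
        Matrix.one_apply_ne (by simp)]
      simp only [Smat, mul_zero, Finset.sum_const_zero]
      ring
    · rename_i m
      rw [show (1 : Matrix (BIdx s) (BIdx s) ℝ) BIdx.v (BIdx.t m) = 0 from
        Matrix.one_apply_ne (by simp)]
      simp only [Smat]
      rw [hrow m]
      push_cast
      field_simp
      ring
    -- σ row
    · rw [show (1 : Matrix (BIdx s) (BIdx s) ℝ) BIdx.σ BIdx.o = 0 from
        Matrix.one_apply_ne (by simp)]
      simp only [Smat, zero_mul, Finset.sum_const_zero]
      ring
    · rw [show (1 : Matrix (BIdx s) (BIdx s) ℝ) BIdx.σ BIdx.v = 0 from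
        Matrix.one_apply_ne (by simp)]
      simp only [Smat, zero_mul, Finset.sum_const_zero]
      ring
    · simp only [Smat, Matrix.one_apply_eq, zero_mul, Finset.sum_const_zero]
      norm_num
    · rw [show (1 : Matrix (BIdx s) (BIdx s) ℝ) BIdx.σ BIdx.σ' = 0 from
        Matrix.one_apply_ne (by simp)]
      simp only [Smat, zero_mul, Finset.sum_const_zero]
      ring
    · rename_i m
      rw [show (1 : Matrix (BIdx s) (BIdx s) ℝ) BIdx.σ (BIdx.t m) = 0 from
        Matrix.one_apply_ne (by simp)]
      simp only [Smat, zero_mul, mul_zero, Finset.sum_const_zero]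
      ring
    -- σ' row
    · rw [show (1 : Matrix (BIdx s) (BIdx s) ℝ) BIdx.σ' BIdx.o = 0 from
        Matrix.one_apply_ne (by simp)]
      simp only [Smat, zero_mul, Finset.sum_const_zero]
      ring
    · rw [show (1 : Matrix (BIdx s) (BIdx s) ℝ) BIdx.σ' BIdx.v = 0 from
        Matrix.one_apply_ne (by simp)]
      simp only [Smat, zero_mul, Finset.sum_const_zero]
      ring
    · rw [show (1 : Matrix (BIdx s) (BIdx s) ℝ) BIdx.σ' BIdx.σ = 0 from
        Matrix.one_apply_ne (by simp)]
      simp only [Smat, zero_mul, Finset.sum_const_zero]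
      ring
    · simp only [Smat, Matrix.one_apply_eq, zero_mul, Finset.sum_const_zero]
      norm_num
    · rename_i m
      rw [show (1 : Matrix (BIdx s) (BIdx s) ℝ) BIdx.σ' (BIdx.t m) = 0 from
        Matrix.one_apply_ne (by simp)]
      simp only [Smat, zero_mul, mul_zero, Finset.sum_const_zero]
      ring
    -- t row
    · rename_i m
      rw [show (1 : Matrix (BIdx s) (BIdx s) ℝ) (BIdx.t m) BIdx.o = 0 from
        Matrix.one_apply_ne (by simp)]
      simp only [Smat]
      rw [hcol m]
      push_cast
      field_simp
      ring
    · rename_i m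
      rw [show (1 : Matrix (BIdx s) (BIdx s) ℝ) (BIdx.t m) BIdx.v = 0 from
        Matrix.one_apply_ne (by simp)]
      simp only [Smat]
      rw [hcol m]
      push_cast
      field_simp
      ring
    · rename_i m
      rw [show (1 : Matrix (BIdx s) (BIdx s) ℝ) (BIdx.t m) BIdx.σ = 0 from
        Matrix.one_apply_ne (by simp)]
      simp only [Smat, mul_zero, zero_mul, Finset.sum_const_zero]
      ring
    · rename_i m
      rw [show (1 : Matrix (BIdx s) (BIdx s) ℝ) (BIdx.t m) BIdx.σ' = 0 from
        Matrix.one_apply_ne (by simp)]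
      simp only [Smat, mul_zero, zero_mul, Finset.sum_const_zero]
      ring
    · rename_i l m
      simp only [Smat]
      rw [tt_sum s l m]
      rcases eq_or_ne l m with rfl | hlm
      · rw [if_pos rfl, Matrix.one_apply_eq]
        push_cast
        field_simp
        linear_combination (-16) * hsq2
      · rw [if_neg hlm, Matrix.one_apply_ne (by simp [hlm])]
        push_cast
        field_simp
        ring
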